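/- Let K be a degree-3 number field, and let ω₁, ω₂ ∈ O_K be nonzero and linearly independent over ℚ. Let 𝔭 be a prime ideal of O_K lying above a rational prime p, unramified over p, with N(𝔭) = p, and assume p ∤ N_{K/ℚ}(ω₁ω₂); let k ≥ 1. For integers g₁, g₂ define S⁽¹⁾(g₁,g₂;𝔭^k) := Σ over integers 1 ≤ n₁, n₂ ≤ p^k with gcd(n₁, n₂, p) = 1 and 𝔭^k dividing the principal ideal (n₁ω₁ + n₂ω₂)O_K, of e((g₁n₁ + g₂n₂)/p^k). Then: (a) if gcd(g₁, g₂, p) = 1, S⁽¹⁾(g₁,g₂;𝔭^k) equals (p−1)p^{k−1} if 𝔭^k divides the principal ideal (g₂ω₁ − g₁ω₂)O_K; equals −p^{k−1} if 𝔭^{k−1} divides (g₂ω₁ − g₁ω₂)O_K but 𝔭^k does not; and equals 0 otherwise. (b) If gcd(g₁, g₂, p^k) = p^{k₀} with 0 ≤ k₀ < k, then S⁽¹⁾(g₁,g₂;𝔭^k) = p^{k₀} · S⁽¹⁾(g₁/p^{k₀}, g₂/p^{k₀}; 𝔭^{k−k₀}). -/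

import Mathlib

open scoped BigOperators
open NumberField

noncomputable section

/-- `e(t) = exp(2πit)`. -/
def eC (t : ℝ) : ℂ := Complex.exp (2 * Real.pi * Complex.I * t)

/-- The exponential sum `S⁽¹⁾(g₁, g₂; 𝔭^k)`: the sum of `e((g₁n₁ + g₂n₂)/p^k)` over the pairs
`1 ≤ n₁, n₂ ≤ p^k` with `gcd(n₁, n₂, p) = 1` such that `𝔭^k` divides the principal ideal
generated by `n₁ω₁ + n₂ω₂`. -/
def expSumS1 {K : Type} [Field K] [NumberField K] (ω₁ ω₂ : 𝓞 K)
    (g₁ g₂ : ℤ) (p k : ℕ) (𝔭 : Ideal (𝓞 K)) : ℂ :=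
  ∑ᶠ (n : ℤ × ℤ) (_ : 1 ≤ n.1 ∧ n.1 ≤ (p : ℤ) ^ k ∧ 1 ≤ n.2 ∧ n.2 ≤ (p : ℤ) ^ k ∧
      Nat.gcd (Int.gcd n.1 n.2) p = 1 ∧ n.1 • ω₁ + n.2 • ω₂ ∈ 𝔭 ^ k),
    eC (((g₁ * n.1 + g₂ * n.2 : ℤ) : ℝ) / (p : ℝ) ^ k)

lemma eC_add (a b : ℝ) : eC (a + b) = eC a * eC b := by
  rw [eC, eC, eC, ← Complex.exp_add]
  congr 1
  push_cast
  ring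

lemma eC_int (m : ℤ) : eC m = 1 := by
  rw [eC, ← Complex.exp_int_mul_two_pi_mul_I m]
  congr 1
  push_cast
  ring

lemma eC_ne_zero (t : ℝ) : eC t ≠ 0 := Complex.exp_ne_zero _

lemma eC_eq_one_iff {t : ℝ} : eC t = 1 ↔ ∃ n : ℤ, t = n := by
  rw [eC, Complex.exp_eq_one_iff]
  constructor
  · rintro ⟨n, hn⟩
    refine ⟨n, ?_⟩
    have h2 : (2 * (Real.pi:ℂ) * Complex.I) ≠ 0 := by
      simp [Real.pi_ne_zero, Complex.I_ne_zero]
    have ht : (t : ℂ) = (n : ℂ) := by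
      apply mul_left_cancel₀ h2
      linear_combination hn
    exact_mod_cast ht
  · rintro ⟨n, rfl⟩
    exact ⟨n, by push_cast; ring⟩

lemma eC_zpow (t : ℝ) (n : ℤ) : eC t ^ n = eC (n * t) := by
  rw [eC, eC, ← Complex.exp_int_mul]
  congr 1
  push_cast
  ring

lemma eC_div_eq_of_dvd {a b q : ℤ} (hq : 0 < q) (h : q ∣ a - b) :
    eC ((a : ℝ) / (q : ℝ)) = eC ((b : ℝ) / (q : ℝ)) := by
  obtain ⟨t, ht⟩ := h
  have hq' : (q : ℝ) ≠ 0 := by exact_mod_cast hq.ne'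
  have : (a : ℝ) / q = (b : ℝ) / q + (t : ℤ) := by
    field_simp
    have : (a : ℝ) = b + q * t := by exact_mod_cast congrArg Int.cast (by linarith [ht] : a = b + q * t)
    linarith
  rw [this, eC_add, eC_int, mul_one]

lemma full_sum_eq (p : ℕ) (j : ℕ) (hp : 0 < p) (m : ℤ) :
    ∑ n ∈ Finset.Icc (1:ℤ) ((p:ℤ)^j), eC (((m * n : ℤ) : ℝ) / (p:ℝ)^j) =
    if (p:ℤ)^j ∣ m then ((p:ℂ))^j else 0 := by
  set Q : ℤ := (p:ℤ)^j with hQdef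
  have hQ : 0 < Q := by positivity
  have hQR : ((p:ℝ))^j = (Q : ℝ) := by push_cast [hQdef]; ring
  set z : ℂ := eC ((m : ℝ) / (Q : ℝ)) with hzdef
  have hz : ∀ n : ℤ, eC (((m * n : ℤ) : ℝ) / (p:ℝ)^j) = z ^ n := by
    intro n
    rw [hzdef, eC_zpow, hQR]
    congr 1
    push_cast
    ring
  have hcard : (Finset.Icc (1:ℤ) Q).card = Q.toNat := by simp
  by_cases hdvd : Q ∣ m
  · obtain ⟨c, rfl⟩ := hdvd
    have hz1 : z = 1 := by
      rw [hzdef]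
      have : ((Q * c : ℤ) : ℝ) / (Q : ℝ) = ((c : ℤ) : ℝ) := by
        field_simp
        push_cast
        ring
      rw [show ((Q*c : ℤ):ℝ) = ((Q:ℝ) * (c:ℝ)) by push_cast; ring] at this ⊢
      rw [this, eC_int]
    simp only [hz, hz1, one_zpow]
    rw [Finset.sum_const, hcard, if_pos ⟨c, rfl⟩, nsmul_eq_mul, mul_one,
      ← Int.cast_natCast (R := ℂ), Int.toNat_of_nonneg hQ.le, hQdef]
    push_cast
    ring
  · have hz1 : z ≠ 1 := by
      intro h
      obtain ⟨n, hn⟩ := eC_eq_one_iff.mp h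
      apply hdvd
      refine ⟨n, ?_⟩
      have hQ' : (Q : ℝ) ≠ 0 := by exact_mod_cast hQ.ne'
      have : (m : ℝ) = Q * n := by
        field_simp at hn
        linarith
      exact_mod_cast this
  -- z ^ Q = 1
    have hzQ : z ^ (Q : ℤ) = 1 := by
      rw [hzdef, eC_zpow]
      have hQ' : (Q : ℝ) ≠ 0 := by exact_mod_cast hQ.ne'
      rw [show (Q : ℝ) * ((m:ℝ) / (Q:ℝ)) = (m : ℝ) by field_simp]
      exact eC_int m
    rw [if_neg hdvd]
    simp only [hz]
    rw [Finset.sum_nbij' (i := fun n : ℤ => (n - 1).toNat) (j := fun n : ℕ => (n : ℤ) + 1)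
      (t := Finset.range Q.toNat) (g := fun n : ℕ => z * z ^ n)]
    · rw [← Finset.mul_sum, geom_sum_eq hz1]
      have : z ^ Q.toNat = 1 := by
        rw [← zpow_natCast, Int.toNat_of_nonneg hQ.le, hzQ]
      rw [this]
      simp
    · intro a ha
      simp only [Finset.mem_Icc] at ha
      simp only [Finset.mem_range]
      omega
    · intro a ha
      simp only [Finset.mem_range] at ha
      simp only [Finset.mem_Icc]
      omega
    · intro a ha
      simp only [Finset.mem_Icc] at ha
      omega
    · intro a ha
      simp
    · intro a ha
      simp only [Finset.mem_Icc] at ha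
      have hz0 : z ≠ 0 := eC_ne_zero _
      have h1 : z ^ a = z ^ (1:ℤ) * z ^ (a - 1) := by
        rw [← zpow_add₀ hz0]
        congr 1
        ring
      rw [h1, zpow_one, ← zpow_natCast z ((a-1).toNat),
        Int.toNat_of_nonneg (by omega : (0:ℤ) ≤ a - 1)]

def ramSum (p : ℕ) (j : ℕ) (m : ℤ) : ℂ :=
  ∑ n ∈ (Finset.Icc (1:ℤ) ((p:ℤ)^j)).filter (fun n => ¬ (p:ℤ) ∣ n),
    eC (((m * n : ℤ) : ℝ) / (p:ℝ)^j)

lemma ram_eq {p : ℕ} (hp : p.Prime) {j : ℕ} (hj : 1 ≤ j) (m : ℤ) :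
    ramSum p j m = (if (p:ℤ)^j ∣ m then ((p:ℂ))^j else 0)
      - (if (p:ℤ)^(j-1) ∣ m then ((p:ℂ))^(j-1) else 0) := by
  obtain ⟨i, rfl⟩ : ∃ i, j = i + 1 := ⟨j - 1, by omega⟩
  have hp0 : (0:ℤ) < p := by exact_mod_cast hp.pos
  have hpR : (0:ℝ) < p := by exact_mod_cast hp.pos
  simp only [Nat.add_sub_cancel]
  have hsplit := Finset.sum_filter_add_sum_filter_not (Finset.Icc (1:ℤ) ((p:ℤ)^(i+1)))
    (fun n => (p:ℤ) ∣ n) (fun n => eC (((m * n : ℤ) : ℝ) / (p:ℝ)^(i+1)))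
  have htot := full_sum_eq p (i+1) hp.pos m
  have hdiv : ∑ n ∈ (Finset.Icc (1:ℤ) ((p:ℤ)^(i+1))).filter (fun n => (p:ℤ) ∣ n),
      eC (((m * n : ℤ) : ℝ) / (p:ℝ)^(i+1))
      = ∑ n ∈ Finset.Icc (1:ℤ) ((p:ℤ)^i), eC (((m * n : ℤ) : ℝ) / (p:ℝ)^i) := by
    refine Finset.sum_nbij' (i := fun n => n / (p:ℤ)) (j := fun t => (p:ℤ) * t) ?_ ?_ ?_ ?_ ?_
    · intro a ha
      simp only [Finset.mem_filter, Finset.mem_Icc] at ha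
      obtain ⟨⟨h1, h2⟩, c, rfl⟩ := ha
      rw [Int.mul_ediv_cancel_left _ hp0.ne']
      simp only [Finset.mem_Icc]
      constructor
      · nlinarith
      · rw [pow_succ'] at h2
        exact le_of_mul_le_mul_left h2 hp0
    · intro a ha
      simp only [Finset.mem_Icc] at ha
      simp only [Finset.mem_filter, Finset.mem_Icc]
      refine ⟨⟨by nlinarith, ?_⟩, Dvd.intro _ rfl⟩
      rw [pow_succ']
      exact mul_le_mul_of_nonneg_left ha.2 hp0.le
    · intro a ha
      simp only [Finset.mem_filter, Finset.mem_Icc] at ha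
      obtain ⟨-, c, rfl⟩ := ha
      rw [Int.mul_ediv_cancel_left _ hp0.ne']
    · intro a ha
      rw [Int.mul_ediv_cancel_left _ hp0.ne']
    · intro a ha
      simp only [Finset.mem_filter, Finset.mem_Icc] at ha
      obtain ⟨-, c, rfl⟩ := ha
      rw [Int.mul_ediv_cancel_left _ hp0.ne']
      congr 1
      rw [pow_succ']
      push_cast
      field_simp
  have htot' := full_sum_eq p i hp.pos m
  rw [ramSum, ← htot, ← hsplit, hdiv, htot']
  ring

lemma ram_eval₁ {p : ℕ} (hp : p.Prime) {j : ℕ} (hj : 1 ≤ j) {m : ℤ} (h : (p:ℤ)^j ∣ m) :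
    ramSum p j m = ((p:ℂ) - 1) * (p:ℂ)^(j-1) := by
  have h2 : (p:ℤ)^(j-1) ∣ m := dvd_trans (pow_dvd_pow _ (by omega)) h
  rw [ram_eq hp hj m, if_pos h, if_pos h2]
  obtain ⟨i, rfl⟩ : ∃ i, j = i + 1 := ⟨j - 1, by omega⟩
  simp only [Nat.add_sub_cancel]
  ring

lemma ram_eval₂ {p : ℕ} (hp : p.Prime) {j : ℕ} (hj : 1 ≤ j) {m : ℤ}
    (h1 : (p:ℤ)^(j-1) ∣ m) (h2 : ¬ (p:ℤ)^j ∣ m) :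
    ramSum p j m = -((p:ℂ)^(j-1)) := by
  rw [ram_eq hp hj m, if_neg h2, if_pos h1]
  ring

lemma ram_eval₃ {p : ℕ} (hp : p.Prime) {j : ℕ} (hj : 1 ≤ j) {m : ℤ}
    (h : ¬ (p:ℤ)^(j-1) ∣ m) :
    ramSum p j m = 0 := by
  have h2 : ¬ (p:ℤ)^j ∣ m := fun hd => h (dvd_trans (pow_dvd_pow _ (by omega)) hd)
  rw [ram_eq hp hj m, if_neg h2, if_neg h]
  ring

lemma ram_scale {p : ℕ} (hp : p.Prime) (k₀ k : ℕ) (hk : k₀ < k) (m : ℤ) :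
    ramSum p k ((p:ℤ)^k₀ * m) = (p:ℂ)^k₀ * ramSum p (k - k₀) m := by
  set j := k - k₀ with hjdef
  have hj : 1 ≤ j := by omega
  have hk1 : 1 ≤ k := by omega
  have hpZ : ((p:ℤ))^k₀ ≠ 0 := pow_ne_zero _ (by exact_mod_cast hp.pos.ne')
  have hsplit : (p:ℤ)^k = (p:ℤ)^k₀ * (p:ℤ)^j := by
    rw [← pow_add]; congr 1; omega
  have hsplit' : (p:ℤ)^(k-1) = (p:ℤ)^k₀ * (p:ℤ)^(j-1) := by
    rw [← pow_add]; congr 1; omega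
  have hCsplit : (p:ℂ)^(k-1) = (p:ℂ)^k₀ * (p:ℂ)^(j-1) := by
    rw [← pow_add]; congr 1; omega
  by_cases h1 : (p:ℤ)^j ∣ m
  · rw [ram_eval₁ hp hj h1, ram_eval₁ hp hk1 (by rw [hsplit]; exact mul_dvd_mul_left _ h1)]
    rw [hCsplit]; ring
  · by_cases h2 : (p:ℤ)^(j-1) ∣ m
    · rw [ram_eval₂ hp hj h2 h1,
        ram_eval₂ hp hk1 (by rw [hsplit']; exact mul_dvd_mul_left _ h2)
          (by rw [hsplit]; exact fun hd => h1 ((mul_dvd_mul_iff_left hpZ).mp hd))]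
      rw [hCsplit]; ring
    · rw [ram_eval₃ hp hj h2,
        ram_eval₃ hp hk1 (by rw [hsplit']; exact fun hd => h2 ((mul_dvd_mul_iff_left hpZ).mp hd))]
      ring

set_option maxHeartbeats 1000000 in
set_option synthInstance.maxHeartbeats 400000 in
open NumberField in
lemma hmem_all {K : Type} [Field K] [NumberField K] (ω₁ ω₂ : 𝓞 K)
    (p : ℕ) (hp : p.Prime) (𝔭 : Ideal (𝓞 K)) (hprime : 𝔭.IsPrime)
    (hnorm : Ideal.absNorm 𝔭 = p) (hunram : (p : 𝓞 K) ∉ 𝔭 ^ 2)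
    (hω₁ : ω₁ ∉ 𝔭) (k : ℕ) :
    ∃ C : ℤ, ∀ j ≤ k, ∀ n₁ n₂ : ℤ,
      ((n₁ : 𝓞 K) * ω₁ + (n₂ : 𝓞 K) * ω₂ ∈ 𝔭 ^ j ↔ (p:ℤ)^j ∣ n₁ + C * n₂) := by
  have hPbot : 𝔭 ≠ ⊥ := by
    intro h
    rw [h, Ideal.absNorm_bot] at hnorm
    exact hp.ne_zero hnorm.symm
  have hPtop : 𝔭 ≠ ⊤ := hprime.ne_top
  have hpP : (p : 𝓞 K) ∈ 𝔭 := by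
    have := Ideal.absNorm_mem 𝔭
    rwa [hnorm] at this
  have hPrime : Prime 𝔭 := Ideal.prime_of_isPrime hPbot hprime
  -- factor (p) = 𝔭 * J with 𝔭 ∤ J
  obtain ⟨J, hJ, hJ2⟩ : ∃ J, Ideal.span {(p:𝓞 K)} = 𝔭 * J ∧ ¬ 𝔭 ∣ J := by
    have h1 : 𝔭 ∣ Ideal.span {(p:𝓞 K)} :=
      Ideal.dvd_iff_le.mpr ((Ideal.span_singleton_le_iff_mem 𝔭).mpr hpP)
    obtain ⟨J, hJ⟩ := h1
    refine ⟨J, hJ, fun hdvd => ?_⟩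
    obtain ⟨J', rfl⟩ := hdvd
    apply hunram
    have hle : Ideal.span {(p:𝓞 K)} ≤ 𝔭 ^ 2 := by
      rw [hJ, show 𝔭 * (𝔭 * J') = 𝔭^2 * J' by ring]
      exact Ideal.mul_le_left
    exact hle (Ideal.mem_span_singleton_self _)
  -- base case: integer in 𝔭 is divisible by p
  have base : ∀ m : ℤ, (m : 𝓞 K) ∈ 𝔭 → (p:ℤ) ∣ m := by
    intro m hm
    by_contra hndvd
    have hcop : IsCoprime (m : ℤ) (p : ℤ) := by
      rw [Int.isCoprime_iff_gcd_eq_one]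
      have hnd : ¬ p ∣ m.natAbs := by
        intro h
        exact hndvd (Int.dvd_natAbs.mp (Int.natCast_dvd_natCast.mpr h))
      have h1 : Nat.Coprime m.natAbs p := ((Nat.Prime.coprime_iff_not_dvd hp).mpr hnd).symm
      simpa [Int.gcd] using h1
    obtain ⟨u, v, huv⟩ := hcop
    apply hPtop
    rw [Ideal.eq_top_iff_one]
    have : ((u * m + v * p : ℤ) : 𝓞 K) ∈ 𝔭 := by
      push_cast
      exact Ideal.add_mem _ (Ideal.mul_mem_left _ _ hm) (Ideal.mul_mem_left _ _ hpP)
    rw [huv] at this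
    exact_mod_cast this
  -- cancellation
  have cancel : ∀ (j : ℕ) (x : 𝓞 K), (p:𝓞 K) * x ∈ 𝔭^(j+1) → x ∈ 𝔭^j := by
    intro j x hx
    have h1 : 𝔭^(j+1) ∣ Ideal.span {(p:𝓞 K) * x} :=
      Ideal.dvd_iff_le.mpr ((Ideal.span_singleton_le_iff_mem _).mpr hx)
    rw [← Ideal.span_singleton_mul_span_singleton, hJ] at h1
    obtain ⟨U, hU⟩ := h1
    have hcancel : J * Ideal.span {x} = 𝔭^j * U := by
      apply mul_left_cancel₀ (show 𝔭 ≠ 0 from hPbot)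
      rw [show 𝔭 * (J * Ideal.span {x}) = 𝔭 * J * Ideal.span {x} by ring, hU, pow_succ]
      ring
    have h2 : 𝔭^j ∣ J * Ideal.span {x} := ⟨U, hcancel⟩
    have h3 : 𝔭^j ∣ Ideal.span {x} := hPrime.pow_dvd_of_dvd_mul_left j hJ2 h2
    exact (Ideal.span_singleton_le_iff_mem _).mp (Ideal.dvd_iff_le.mp h3)
  -- integer membership
  have L6 : ∀ (j : ℕ) (m : ℤ), ((m : 𝓞 K) ∈ 𝔭 ^ j ↔ (p:ℤ)^j ∣ m) := by
    intro j
    induction j with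
    | zero => simp
    | succ j ih =>
      intro m
      constructor
      · intro hm
        have h1 : (m : 𝓞 K) ∈ 𝔭 := Ideal.pow_le_self (Nat.succ_ne_zero j) hm
        obtain ⟨m', rfl⟩ := base m h1
        have h2 : (m' : 𝓞 K) ∈ 𝔭^j := by
          apply cancel j
          have : ((p * m' : ℤ) : 𝓞 K) = (p:𝓞 K) * (m' : 𝓞 K) := by push_cast; ring
          rwa [this] at hm
        have := (ih m').mp h2
        rw [pow_succ']
        exact mul_dvd_mul_left _ this
      · rintro ⟨t, rfl⟩
        have : (((p:ℤ)^(j+1) * t : ℤ) : 𝓞 K) = (p : 𝓞 K)^(j+1) * (t : 𝓞 K) := by push_cast; ring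
        rw [this]
        exact Ideal.mul_mem_right _ _ (Ideal.pow_mem_pow hpP _)
  -- units modulo 𝔭^j
  have L7 : ∀ (j : ℕ) (x : 𝓞 K), x ∉ 𝔭 → ∃ y, x * y - 1 ∈ 𝔭^j := by
    intro j x hx
    have hsup : Ideal.span {x} ⊔ 𝔭 = ⊤ := by
      by_contra hne
      apply hx
      have h1 : 𝔭 ≤ Ideal.span {x} ⊔ 𝔭 := le_sup_right
      have h2 := (Ideal.IsPrime.isMaximal hprime hPbot).eq_of_le hne h1
      rw [h2]
      exact Ideal.mem_sup_left (Ideal.mem_span_singleton_self x)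
    have hcop : IsCoprime (Ideal.span {x}) (𝔭^j) :=
      (Ideal.isCoprime_iff_sup_eq.mpr hsup).pow_right
    have hsup2 : Ideal.span {x} ⊔ 𝔭^j = ⊤ := Ideal.isCoprime_iff_sup_eq.mp hcop
    have h1 : (1 : 𝓞 K) ∈ Ideal.span {x} ⊔ 𝔭^j := by rw [hsup2]; trivial
    obtain ⟨a, ha, b, hb, hab⟩ := Submodule.mem_sup.mp h1
    obtain ⟨y, hy⟩ := Ideal.mem_span_singleton'.mp ha
    refine ⟨y, ?_⟩
    have : x * y - 1 = -b := by rw [← hab, mul_comm x y, hy]; ring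
    rw [this]
    exact neg_mem hb
  -- existence of C
  have hcardQ : Nat.card (𝓞 K ⧸ 𝔭^k) = p^k := by
    rw [← Submodule.cardQuot_apply, ← Ideal.absNorm_apply, map_pow, hnorm]
  have hfin : Finite (𝓞 K ⧸ 𝔭^k) :=
    Nat.finite_of_card_ne_zero (by rw [hcardQ]; exact pow_ne_zero _ hp.pos.ne')
  letI : Fintype (𝓞 K ⧸ 𝔭^k) := Fintype.ofFinite _
  set F : Fin (p^k) → 𝓞 K ⧸ 𝔭^k :=
    fun n => Ideal.Quotient.mk (𝔭^k) (((n : ℕ) : ℤ) : 𝓞 K) with hF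
  have hFinj : Function.Injective F := by
    intro a b hab
    have h1 : ((((a:ℕ):ℤ) - ((b:ℕ):ℤ) : ℤ) : 𝓞 K) ∈ 𝔭^k := by
      rw [← Ideal.Quotient.eq_zero_iff_mem]
      push_cast
      rw [map_sub]
      rw [hF] at hab
      simp only at hab
      rw [sub_eq_zero]
      exact_mod_cast hab
    have h2 := (L6 k _).mp h1
    have ha : ((a:ℕ):ℤ) < (p:ℤ)^k := by have := a.isLt; exact_mod_cast this
    have hb : ((b:ℕ):ℤ) < (p:ℤ)^k := by have := b.isLt; exact_mod_cast this
    have ha0 : (0:ℤ) ≤ ((a:ℕ):ℤ) := Int.natCast_nonneg _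
    have hb0 : (0:ℤ) ≤ ((b:ℕ):ℤ) := Int.natCast_nonneg _
    have hlt : |((a:ℕ):ℤ) - ((b:ℕ):ℤ)| < (p:ℤ)^k := by
      rw [abs_lt]
      omega
    have hz : ((a:ℕ):ℤ) - ((b:ℕ):ℤ) = 0 := by
      by_contra hne
      have := Int.le_of_dvd (abs_pos.mpr hne) ((dvd_abs _ _).mpr h2)
      omega
    have : (a:ℕ) = (b:ℕ) := by omega
    exact Fin.ext this
  have hFsurj : Function.Surjective F := by
    have hcard : Fintype.card (Fin (p^k)) = Fintype.card (𝓞 K ⧸ 𝔭^k) := by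
      rw [Fintype.card_fin, ← Nat.card_eq_fintype_card, hcardQ]
    exact ((Fintype.bijective_iff_injective_and_card F).mpr ⟨hFinj, hcard⟩).2
  obtain ⟨y, hy⟩ := L7 k ω₁ hω₁
  obtain ⟨n, hn⟩ := hFsurj (Ideal.Quotient.mk (𝔭^k) (ω₂ * y))
  set C : ℤ := ((n : ℕ) : ℤ) with hCdef
  have hCmem : ω₂ - (C : 𝓞 K) * ω₁ ∈ 𝔭^k := by
    have h1 : ω₂ * y - (C : 𝓞 K) ∈ 𝔭^k := by
      rw [← Ideal.Quotient.eq_zero_iff_mem, map_sub, sub_eq_zero]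
      exact hn.symm
    have h2 : ω₂ * (1 - ω₁ * y) ∈ 𝔭^k :=
      Ideal.mul_mem_left _ _ (by rw [show (1 : 𝓞 K) - ω₁*y = -(ω₁*y-1) by ring]; exact neg_mem hy)
    have h3 : (ω₂ * y - (C:𝓞 K)) * ω₁ ∈ 𝔭^k := Ideal.mul_mem_right _ _ h1
    have : ω₂ - (C : 𝓞 K) * ω₁ = ω₂ * (1 - ω₁ * y) + (ω₂ * y - (C:𝓞 K)) * ω₁ := by ring
    rw [this]
    exact Ideal.add_mem _ h2 h3
  refine ⟨C, fun j hj n₁ n₂ => ?_⟩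
  have h0 : ω₂ - (C : 𝓞 K) * ω₁ ∈ 𝔭^j := Ideal.pow_le_pow_right hj hCmem
  have key : (n₁ : 𝓞 K) * ω₁ + (n₂ : 𝓞 K) * ω₂
      = ((n₁ + C * n₂ : ℤ) : 𝓞 K) * ω₁ + (n₂ : 𝓞 K) * (ω₂ - (C:𝓞 K) * ω₁) := by
    push_cast; ring
  have step1 : (n₁ : 𝓞 K) * ω₁ + (n₂ : 𝓞 K) * ω₂ ∈ 𝔭^j ↔
      ((n₁ + C * n₂ : ℤ) : 𝓞 K) * ω₁ ∈ 𝔭^j := by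
    rw [key]
    constructor
    · intro h
      have := Ideal.sub_mem _ h (Ideal.mul_mem_left _ ((n₂ : 𝓞 K)) h0)
      simpa using this
    · intro h
      exact Ideal.add_mem _ h (Ideal.mul_mem_left _ _ h0)
  have step2 : ((n₁ + C * n₂ : ℤ) : 𝓞 K) * ω₁ ∈ 𝔭^j ↔ ((n₁ + C * n₂ : ℤ) : 𝓞 K) ∈ 𝔭^j := by
    constructor
    · intro h
      obtain ⟨y', hy'⟩ := L7 j ω₁ hω₁
      have h1 : ((n₁ + C * n₂ : ℤ) : 𝓞 K) * ω₁ * y' ∈ 𝔭^j := Ideal.mul_mem_right _ _ h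
      have h2 : ((n₁ + C * n₂ : ℤ) : 𝓞 K) * (ω₁ * y' - 1) ∈ 𝔭^j := Ideal.mul_mem_left _ _ hy'
      have : ((n₁ + C * n₂ : ℤ) : 𝓞 K)
          = ((n₁ + C * n₂ : ℤ) : 𝓞 K) * ω₁ * y' - ((n₁ + C * n₂ : ℤ) : 𝓞 K) * (ω₁ * y' - 1) := by
        ring
      rw [this]
      exact Ideal.sub_mem _ h1 h2
    · intro h
      exact Ideal.mul_mem_right _ _ h
  rw [step1, step2, L6 j]

set_option maxHeartbeats 1000000 in
open NumberField in
lemma bridge {K : Type} [Field K] [NumberField K] (ω₁ ω₂ : 𝓞 K)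
    (p : ℕ) (hp : p.Prime) (𝔭 : Ideal (𝓞 K))
    (C : ℤ) (j : ℕ) (hj : 1 ≤ j)
    (hmem : ∀ n₁ n₂ : ℤ, ((n₁ : 𝓞 K) * ω₁ + (n₂ : 𝓞 K) * ω₂ ∈ 𝔭 ^ j ↔ (p:ℤ)^j ∣ n₁ + C * n₂))
    (g₁ g₂ : ℤ) :
    expSumS1 ω₁ ω₂ g₁ g₂ p j 𝔭 = ramSum p j (g₂ - g₁ * C) := by
  classical
  have hp0 : (0:ℤ) < (p:ℤ) := by exact_mod_cast hp.pos
  have hq : (0:ℤ) < (p:ℤ)^j := by positivity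
  set q : ℤ := (p:ℤ)^j with hqdef
  have hmem2 : ∀ n₁ n₂ : ℤ, (n₁ • ω₁ + n₂ • ω₂ ∈ 𝔭 ^ j ↔ q ∣ n₁ + C * n₂) := by
    intro n₁ n₂
    rw [zsmul_eq_mul, zsmul_eq_mul]
    exact hmem n₁ n₂
  set rep : ℤ → ℤ := fun t => (-C * t - 1) % q + 1 with hrepdef
  have hrep_lb : ∀ t, 1 ≤ rep t := by
    intro t
    have := Int.emod_nonneg (-C * t - 1) hq.ne'
    simp only [hrepdef]
    omega
  have hrep_ub : ∀ t, rep t ≤ q := by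
    intro t
    have := Int.emod_lt_of_pos (-C * t - 1) hq
    simp only [hrepdef]
    omega
  have hrep_dvd : ∀ t, q ∣ rep t + C * t := by
    intro t
    refine ⟨-((-C * t - 1) / q), ?_⟩
    simp only [hrepdef]
    rw [Int.emod_def]
    ring
  set s : Finset (ℤ × ℤ) := ((Finset.Icc (1:ℤ) q) ×ˢ (Finset.Icc (1:ℤ) q)).filter
    (fun n => Nat.gcd (Int.gcd n.1 n.2) p = 1 ∧ n.1 • ω₁ + n.2 • ω₂ ∈ 𝔭 ^ j) with hs
  have h1 : expSumS1 ω₁ ω₂ g₁ g₂ p j 𝔭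
      = ∑ n ∈ s, eC (((g₁ * n.1 + g₂ * n.2 : ℤ) : ℝ) / (p:ℝ)^j) := by
    rw [expSumS1]
    apply finsum_cond_eq_sum_of_cond_iff
    intro x hx
    simp only [hs, Finset.mem_filter, Finset.mem_product, Finset.mem_Icc]
    tauto
  rw [h1, ramSum]
  refine Finset.sum_nbij' (i := fun n : ℤ × ℤ => n.2) (j := fun t : ℤ => (rep t, t))
    ?_ ?_ ?_ ?_ ?_
  · intro a ha
    simp only [hs, Finset.mem_filter, Finset.mem_product, Finset.mem_Icc] at ha
    obtain ⟨⟨⟨ha1, ha2⟩, ha3, ha4⟩, hgcd, hmemb⟩ := ha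
    have hdv : q ∣ a.1 + C * a.2 := (hmem2 _ _).mp hmemb
    simp only [Finset.mem_filter, Finset.mem_Icc]
    refine ⟨⟨ha3, ha4⟩, ?_⟩
    intro hpn2
    have hpq : (p:ℤ) ∣ q := by rw [hqdef]; exact dvd_pow_self _ (by omega)
    have h3 : (p:ℤ) ∣ a.1 := by
      have := dvd_sub (hpq.trans hdv) (Dvd.dvd.mul_left hpn2 C)
      simpa using this
    have natg : p ∣ Int.gcd a.1 a.2 := Int.natCast_dvd_natCast.mp (Int.dvd_coe_gcd h3 hpn2)
    have : p ∣ Nat.gcd (Int.gcd a.1 a.2) p := Nat.dvd_gcd natg dvd_rfl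
    rw [hgcd] at this
    exact hp.ne_one (Nat.dvd_one.mp this)
  · intro t ht
    simp only [Finset.mem_filter, Finset.mem_Icc] at ht
    obtain ⟨⟨ht1, ht2⟩, hpt⟩ := ht
    simp only [hs, Finset.mem_filter, Finset.mem_product, Finset.mem_Icc]
    refine ⟨⟨⟨hrep_lb t, hrep_ub t⟩, ht1, ht2⟩, ?_, ?_⟩
    · have hnd : ¬ p ∣ Int.gcd (rep t) t := by
        intro h
        exact hpt ((Int.natCast_dvd_natCast.mpr h).trans (Int.gcd_dvd_right _ _))
      exact ((hp.coprime_iff_not_dvd).mpr hnd).symm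
    · exact (hmem2 _ _).mpr (hrep_dvd t)
  · intro a ha
    simp only [hs, Finset.mem_filter, Finset.mem_product, Finset.mem_Icc] at ha
    obtain ⟨⟨⟨ha1, ha2⟩, ha3, ha4⟩, hgcd, hmemb⟩ := ha
    have hdv : q ∣ a.1 + C * a.2 := (hmem2 _ _).mp hmemb
    have hd : q ∣ a.1 - rep a.2 := by
      have := dvd_sub hdv (hrep_dvd a.2)
      simpa using this
    have hlb := hrep_lb a.2
    have hub := hrep_ub a.2
    have hzero : a.1 - rep a.2 = 0 := by
      by_contra hne
      have := Int.le_of_dvd (abs_pos.mpr hne) ((dvd_abs _ _).mpr hd)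
      rcases abs_cases (a.1 - rep a.2) with ⟨h, -⟩ | ⟨h, -⟩ <;> omega
    have heq : rep a.2 = a.1 := by omega
    rw [heq]
  · intro t ht
    rfl
  · intro a ha
    simp only [hs, Finset.mem_filter, Finset.mem_product, Finset.mem_Icc] at ha
    obtain ⟨-, -, hmemb⟩ := ha
    have hdv : q ∣ a.1 + C * a.2 := (hmem2 _ _).mp hmemb
    have hden : (p:ℝ)^j = ((q : ℤ) : ℝ) := by rw [hqdef]; push_cast; ring
    rw [hden]
    apply eC_div_eq_of_dvd hq
    have he : (g₁ * a.1 + g₂ * a.2) - (g₂ - g₁ * C) * a.2 = g₁ * (a.1 + C * a.2) := by ring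
    rw [he]
    exact Dvd.dvd.mul_left hdv g₁


theorem statement8
    (K : Type) [Field K] [NumberField K] (hdeg : Module.finrank ℚ K = 3)
    (ω₁ ω₂ : 𝓞 K) (hω₁ : ω₁ ≠ 0) (hω₂ : ω₂ ≠ 0)
    (hli : LinearIndependent ℚ ![((ω₁ : K)), ((ω₂ : K))])
    (p : ℕ) (hp : p.Prime) (𝔭 : Ideal (𝓞 K)) (hprime : 𝔭.IsPrime)
    (hnorm : Ideal.absNorm 𝔭 = p) (hunram : (p : 𝓞 K) ∉ 𝔭 ^ 2)
    (hpω : ¬ ((p : ℤ) ∣ Algebra.norm ℤ (ω₁ * ω₂)))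
    (k : ℕ) (hk : 1 ≤ k) (g₁ g₂ : ℤ) :
    (Nat.gcd (Int.gcd g₁ g₂) p = 1 →
      ((g₂ • ω₁ - g₁ • ω₂ ∈ 𝔭 ^ k →
        expSumS1 ω₁ ω₂ g₁ g₂ p k 𝔭 = ((p : ℂ) - 1) * (p : ℂ) ^ (k - 1)) ∧
      (g₂ • ω₁ - g₁ • ω₂ ∈ 𝔭 ^ (k - 1) → g₂ • ω₁ - g₁ • ω₂ ∉ 𝔭 ^ k →
        expSumS1 ω₁ ω₂ g₁ g₂ p k 𝔭 = -((p : ℂ) ^ (k - 1))) ∧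
      (g₂ • ω₁ - g₁ • ω₂ ∉ 𝔭 ^ (k - 1) →
        expSumS1 ω₁ ω₂ g₁ g₂ p k 𝔭 = 0))) ∧
    (∀ k₀ : ℕ, k₀ < k → Nat.gcd (Int.gcd g₁ g₂) (p ^ k) = p ^ k₀ →
      ∀ g₁' g₂' : ℤ, g₁ = (p : ℤ) ^ k₀ * g₁' → g₂ = (p : ℤ) ^ k₀ * g₂' →
        expSumS1 ω₁ ω₂ g₁ g₂ p k 𝔭
          = (p : ℂ) ^ k₀ * expSumS1 ω₁ ω₂ g₁' g₂' p (k - k₀) 𝔭) := by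
  classical
  have hω₁P : ω₁ ∉ 𝔭 := by
    intro hmem
    apply hpω
    have h1 : Ideal.span {ω₁} ≤ 𝔭 := (Ideal.span_singleton_le_iff_mem _).mpr hmem
    have h2 : Ideal.absNorm 𝔭 ∣ Ideal.absNorm (Ideal.span {ω₁}) :=
      Ideal.absNorm_dvd_absNorm_of_le h1
    rw [hnorm, Ideal.absNorm_span_singleton] at h2
    have h3 : (p:ℤ) ∣ Algebra.norm ℤ ω₁ :=
      (Int.natCast_dvd_natCast.mpr h2).trans (Int.natAbs_dvd.mpr dvd_rfl)
    rw [map_mul]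
    exact h3.mul_right _
  obtain ⟨C, hC⟩ := hmem_all ω₁ ω₂ p hp 𝔭 hprime hnorm hunram hω₁P k
  have hb : ∀ j, 1 ≤ j → j ≤ k → ∀ a b : ℤ,
      expSumS1 ω₁ ω₂ a b p j 𝔭 = ramSum p j (b - a * C) :=
    fun j h1 h2 a b => bridge ω₁ ω₂ p hp 𝔭 C j h1 (hC j h2) a b
  have hmg : ∀ j, j ≤ k → ∀ a b : ℤ, (b • ω₁ - a • ω₂ ∈ 𝔭^j ↔ (p:ℤ)^j ∣ (b - a*C)) := by
    intro j hjk a b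
    have h1 := hC j hjk b (-a)
    have e1 : ((b : ℤ) : 𝓞 K) * ω₁ + ((-a : ℤ) : 𝓞 K) * ω₂ = b • ω₁ - a • ω₂ := by
      rw [zsmul_eq_mul, zsmul_eq_mul]
      push_cast
      ring
    have e2 : b + C * (-a) = b - a * C := by ring
    rw [e1, e2] at h1
    exact h1
  refine ⟨fun _ => ⟨?_, ?_, ?_⟩, ?_⟩
  · intro h
    rw [hb k hk le_rfl]
    exact ram_eval₁ hp hk ((hmg k le_rfl g₁ g₂).mp h)
  · intro h1 h2
    rw [hb k hk le_rfl]
    exact ram_eval₂ hp hk ((hmg (k-1) (by omega) g₁ g₂).mp h1)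
      (fun hd => h2 ((hmg k le_rfl g₁ g₂).mpr hd))
  · intro h1
    rw [hb k hk le_rfl]
    exact ram_eval₃ hp hk (fun hd => h1 ((hmg (k-1) (by omega) g₁ g₂).mpr hd))
  · intro k₀ hk₀ _ g₁' g₂' e1 e2
    subst e1; subst e2
    rw [hb k hk le_rfl, hb (k-k₀) (by omega) (by omega)]
    rw [show (p:ℤ)^k₀ * g₂' - (p:ℤ)^k₀ * g₁' * C = (p:ℤ)^k₀ * (g₂' - g₁'*C) by ring]
    exact ram_scale hp k₀ k hk₀ _


end
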